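/- arXiv:2507.07253 — 2 statements merged into one kernel-verified Lean document; each statement's English description precedes it below -/
import Mathlib

section
/- For every natural number n ≥ 0, the Bernoulli polynomial satisfies B_{2n}(5/4) = (8n − (2^{2n} − 2)·B_{2n}) / 2^{4n}, where B_{2n} is the 2n-th Bernoulli number. -/
open PowerSeries Nat

private noncomputable def FB (x : ℚ) : ℚ⟦X⟧ :=
  PowerSeries.mk fun n => Polynomial.aeval x ((1 / n ! : ℚ) • Polynomial.bernoulli n)

private lemma FB_spec (t : ℚ) : FB t * (exp ℚ - 1) = PowerSeries.X * rescale t (exp ℚ) := by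
  unfold FB; exact Polynomial.bernoulli_generating_function t

private lemma exp_sub_one_ne : (exp ℚ - 1 : ℚ⟦X⟧) ≠ 0 := by
  intro h
  have := congrArg (PowerSeries.coeff 1) h
  simp [coeff_exp] at this

private lemma key_series (x : ℚ) :
    FB x + FB (x + 1/2) = PowerSeries.C 2 * rescale (1/2 : ℚ) (FB (2 * x)) := by
  apply mul_right_cancel₀ exp_sub_one_ne
  set H : ℚ⟦X⟧ := rescale (1/2 : ℚ) (exp ℚ) with hH
  have hHH : H * H = exp ℚ := by
    rw [hH, exp_mul_exp_eq_exp_add]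
    norm_num [rescale_one]
  have hG : rescale (1/2 : ℚ) (FB (2 * x)) * (H - 1) =
      (PowerSeries.C (1/2) * PowerSeries.X) * rescale x (exp ℚ) := by
    have := congrArg (rescale (1/2 : ℚ)) (FB_spec (2 * x))
    rw [map_mul, map_sub, map_one, map_mul] at this
    rw [hH, this, rescale_X, rescale_rescale]
    rw [show 2 * x * (1/2 : ℚ) = x by ring]
  have hsplit : (exp ℚ - 1 : ℚ⟦X⟧) = (H - 1) * (H + 1) := by
    rw [← hHH]; ring
  have hE : rescale (x + 1/2) (exp ℚ) = rescale x (exp ℚ) * H := by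
    rw [hH, exp_mul_exp_eq_exp_add]
  have hone : (PowerSeries.C (2:ℚ) : ℚ⟦X⟧) * (PowerSeries.C (1/2 : ℚ)) = 1 := by
    rw [← map_mul]; norm_num
  calc (FB x + FB (x + 1/2)) * (exp ℚ - 1)
      = FB x * (exp ℚ - 1) + FB (x + 1/2) * (exp ℚ - 1) := by ring
    _ = PowerSeries.X * rescale x (exp ℚ) * (1 + H) := by
        rw [FB_spec x, FB_spec (x + 1/2), hE]; ring
    _ = PowerSeries.C 2 * ((PowerSeries.C (1/2) * PowerSeries.X) * rescale x (exp ℚ))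
          * (H + 1) := by
        linear_combination (-(PowerSeries.X * rescale x (exp ℚ) * (H + 1))) * hone
    _ = PowerSeries.C 2 * rescale (1/2 : ℚ) (FB (2 * x)) * (exp ℚ - 1) := by
        rw [hsplit, ← hG]; ring

private lemma reflect_series (x : ℚ) : FB (1 - x) = rescale (-1 : ℚ) (FB x) := by
  apply mul_right_cancel₀ exp_sub_one_ne
  have hr : rescale (-1 : ℚ) (FB x) * (rescale (-1 : ℚ) (exp ℚ) - 1) =
      (PowerSeries.C (-1) * PowerSeries.X) * rescale (-x) (exp ℚ) := by
    have := congrArg (rescale (-1 : ℚ)) (FB_spec x)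
    rw [map_mul, map_sub, map_one, map_mul] at this
    rw [this, rescale_X, rescale_rescale]
    norm_num
  have hinv : rescale (-1 : ℚ) (exp ℚ) * exp ℚ = 1 := by
    have h := exp_mul_exp_eq_exp_add (-1 : ℚ) 1
    rw [rescale_one, show (-1 : ℚ) + 1 = 0 by norm_num, rescale_zero] at h
    simpa using h
  have hexp : rescale (-x) (exp ℚ) * exp ℚ = rescale (1 - x) (exp ℚ) := by
    have h := exp_mul_exp_eq_exp_add (-x : ℚ) 1
    rw [rescale_one, show (-x : ℚ) + 1 = 1 - x by ring] at h
    simpa using h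
  have hmul := congrArg (· * exp ℚ) hr
  have hL : rescale (-1 : ℚ) (FB x) * (rescale (-1 : ℚ) (exp ℚ) - 1) * exp ℚ
      = rescale (-1 : ℚ) (FB x) * (1 - exp ℚ) := by
    linear_combination (rescale (-1 : ℚ) (FB x)) * hinv
  have hR : (PowerSeries.C (-1) * PowerSeries.X) * rescale (-x) (exp ℚ) * exp ℚ
      = PowerSeries.C (-1) * PowerSeries.X * rescale (1 - x) (exp ℚ) := by
    rw [mul_assoc, hexp]
  rw [hL, hR] at hmul
  rw [FB_spec]
  have hC : (PowerSeries.C (-1) : ℚ⟦X⟧) = -1 := by simp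
  rw [hC] at hmul
  linear_combination hmul

private lemma mult_two (x : ℚ) (n : ℕ) :
    (Polynomial.bernoulli n).eval x + (Polynomial.bernoulli n).eval (x + 1/2)
      = 2 * (1/2 : ℚ) ^ n * (Polynomial.bernoulli n).eval (2 * x) := by
  have h := congrArg (PowerSeries.coeff n) (key_series x)
  simp only [FB, map_add, coeff_mk, coeff_C_mul, coeff_rescale, map_smul,
    Polynomial.coe_aeval_eq_eval, smul_eq_mul] at h
  have hfac : (n ! : ℚ) ≠ 0 := by exact_mod_cast Nat.factorial_ne_zero n
  field_simp at h
  have key : (Polynomial.eval x (Polynomial.bernoulli n)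
      + Polynomial.eval ((x * 2 + 1) / 2) (Polynomial.bernoulli n)) * 2 ^ n
      = 2 * Polynomial.eval (2 * x) (Polynomial.bernoulli n) := by
    have h12 : (1/2 : ℚ) ^ n * 2 ^ n = 1 := by rw [← mul_pow]; norm_num
    rw [h, mul_comm x 2]
    linear_combination (2 * Polynomial.eval (2 * x) (Polynomial.bernoulli n)) * h12
  have h2 : (2 : ℚ) ^ n ≠ 0 := by positivity
  rw [show x + 1/2 = (x * 2 + 1) / 2 by ring, show 2 * x = x * 2 by ring]
  exact h

private lemma reflect (x : ℚ) (n : ℕ) :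
    (Polynomial.bernoulli n).eval (1 - x) = (-1 : ℚ) ^ n * (Polynomial.bernoulli n).eval x := by
  have h := congrArg (PowerSeries.coeff n) (reflect_series x)
  simp only [FB, coeff_mk, coeff_rescale, map_smul,
    Polynomial.coe_aeval_eq_eval, smul_eq_mul] at h
  have hfac : (n ! : ℚ) ≠ 0 := by exact_mod_cast Nat.factorial_ne_zero n
  field_simp at h
  linear_combination h

theorem bernoulli_poly_even_at_five_quarters (n : ℕ) :
    (Polynomial.bernoulli (2 * n)).eval (5 / 4 : ℚ) =
      (8 * n - (2 ^ (2 * n) - 2) * bernoulli (2 * n)) / 2 ^ (4 * n) := by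
  have hhalf : (Polynomial.bernoulli (2 * n)).eval (1/2 : ℚ)
      = (2 * (1/2 : ℚ) ^ (2 * n) - 1) * bernoulli (2 * n) := by
    have := mult_two 0 (2 * n)
    rw [zero_add, mul_zero, Polynomial.bernoulli_eval_zero] at this
    linarith [this]
  have hq : (Polynomial.bernoulli (2 * n)).eval (1/4 : ℚ)
      = (1/2 : ℚ) ^ (2 * n) * (Polynomial.bernoulli (2 * n)).eval (1/2 : ℚ) := by
    have h1 := mult_two (1/4) (2 * n)
    have h2 := reflect (1/4 : ℚ) (2 * n)
    rw [show (1 : ℚ) - 1/4 = 1/4 + 1/2 by norm_num] at h2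
    rw [h2, Even.neg_one_pow ⟨n, by ring⟩, one_mul] at h1
    rw [show (2 : ℚ) * (1/4) = 1/2 by norm_num] at h1
    linarith [h1]
  have hadd : (Polynomial.bernoulli (2 * n)).eval (5/4 : ℚ)
      = (Polynomial.bernoulli (2 * n)).eval (1/4 : ℚ)
        + (2 * n : ℚ) * (1/4 : ℚ) ^ (2 * n - 1) := by
    have := Polynomial.bernoulli_eval_one_add (2 * n) (1/4 : ℚ)
    rw [show (1 : ℚ) + 1/4 = 5/4 by norm_num] at this
    exact_mod_cast this
  rw [hadd, hq, hhalf]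
  rcases n with _ | m
  · norm_num
  · have h1 : 2 * (m + 1) - 1 = 2 * m + 1 := by omega
    rw [h1]
    have p1 : ((1:ℚ)/2) ^ (2 * (m + 1)) = 1 / 2 ^ (2 * (m + 1)) := by
      rw [div_pow, one_pow]
    have p2 : ((1:ℚ)/4) ^ (2 * m + 1) = 1 / 2 ^ (2 * (2 * m + 1)) := by
      rw [show ((1:ℚ)/4) = 1 / 2 ^ 2 by norm_num, div_pow, one_pow, ← pow_mul]
    rw [p1, p2]
    have h2 : (2 : ℚ) ^ (2 * (m + 1)) ≠ 0 := by positivity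
    have h3 : (2 : ℚ) ^ (2 * (2 * m + 1)) ≠ 0 := by positivity
    have h4 : (2 : ℚ) ^ (4 * (m + 1)) ≠ 0 := by positivity
    field_simp
    rw [show ((2:ℚ) ^ (2 * (m + 1))) ^ 2 = 4 * 2 ^ (2 * (2 * m + 1)) by
          rw [← pow_mul, show 2 * (m + 1) * 2 = 2 * (2 * m + 1) + 2 by ring, pow_add]
          ring,
        show (2:ℚ) ^ (4 * (m + 1)) = 4 * 2 ^ (2 * (2 * m + 1)) by
          rw [show 4 * (m + 1) = 2 * (2 * m + 1) + 2 by ring, pow_add]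
          ring]
    ring
end

section
/- Let N be an odd natural number and T > 0 a real number with N² > 4NT + 1. Then there exists a nonzero real-valued symmetric function f on ℤ/N²ℤ (i.e., f(n) = f(−n)) such that its normalized finite Fourier transform satisfies Ff = f and f(n) = 0 for all representatives n with |n| ≤ NT. -/
open scoped Real

/-- The normalized finite Fourier transform on `ℤ/N²ℤ → ℂ`:
`(F f)(n) = N^{-1} ∑_{m} f(m) e^{-2πi mn/N²}`. -/
noncomputable def finiteFourierSq (N : ℕ) [NeZero (N ^ 2)] (f : ZMod (N ^ 2) → ℂ) :
    ZMod (N ^ 2) → ℂ :=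
  fun n => (N : ℂ)⁻¹ *
    ∑ m : ZMod (N ^ 2), f m * Complex.exp (-2 * π * Complex.I * (m.val * n.val) / (N ^ 2 : ℕ))

namespace FFSqAux

open Finset AddChar

lemma charSum (n : ℕ) [NeZero n] (t : ZMod n) :
    ∑ x : ZMod n, ZMod.stdAddChar (t * x) = if t = 0 then (n : ℂ) else 0 := by
  split_ifs with h
  · simp only [h, zero_mul, map_zero_eq_one, sum_const, card_univ, nsmul_eq_mul, mul_one]
    simp [ZMod.card]
  · have h2 := AddChar.sum_eq_zero_of_ne_one (ZMod.isPrimitive_stdAddChar n h)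
    simpa only [mulShift_apply] using h2

lemma sum_zmod (n : ℕ) [NeZero n] (g : ZMod n → ℂ) :
    ∑ x : ZMod n, g x = ∑ i ∈ Finset.range n, g (i : ZMod n) := by
  refine Finset.sum_nbij' (fun x => x.val) (fun i => (i : ZMod n)) ?_ ?_ ?_ ?_ ?_
  · intro a _; exact Finset.mem_range.mpr (ZMod.val_lt a)
  · intro a _; exact Finset.mem_univ _
  · intro a _; exact ZMod.natCast_zmod_val a
  · intro a ha; exact ZMod.val_cast_of_lt (Finset.mem_range.mp ha)
  · intro a _; rw [ZMod.natCast_zmod_val]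

lemma stepdown (N : ℕ) [NeZero N] [NeZero (N ^ 2)] (c : ℕ) :
    ZMod.stdAddChar (((N * c : ℕ) : ZMod (N ^ 2))) = ZMod.stdAddChar ((c : ZMod N)) := by
  have hN : (N : ℂ) ≠ 0 := by exact_mod_cast (NeZero.ne N)
  have h1 : (((N * c : ℕ) : ℤ) : ZMod (N ^ 2)) = ((N * c : ℕ) : ZMod (N ^ 2)) := by push_cast; ring
  have h2 : (((c : ℕ) : ℤ) : ZMod N) = ((c : ℕ) : ZMod N) := by push_cast; ring
  rw [← h1, ← h2, ZMod.stdAddChar_coe, ZMod.stdAddChar_coe]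
  congr 1
  push_cast
  field_simp

lemma gauss_sq (N : ℕ) [NeZero N] [NeZero (N ^ 2)] (hN : Odd N) :
    ∑ x : ZMod (N ^ 2), ZMod.stdAddChar (x * x) = (N : ℂ) := by
  have hN0 : 0 < N := Nat.pos_of_ne_zero (NeZero.ne N)
  rw [sum_zmod]
  -- reindex
  have key : ∑ i ∈ Finset.range (N ^ 2),
        ZMod.stdAddChar ((i : ZMod (N ^ 2)) * (i : ZMod (N ^ 2)))
      = ∑ a ∈ Finset.range N, ∑ b ∈ Finset.range N,
        ZMod.stdAddChar ((((a + N * b : ℕ)) : ZMod (N ^ 2)) * ((a + N * b : ℕ) : ZMod (N ^ 2))) := by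
    rw [← Finset.sum_product']
    refine Finset.sum_nbij' (fun i => (i % N, i / N)) (fun p => p.1 + N * p.2) ?_ ?_ ?_ ?_ ?_
    · intro i hi
      rw [Finset.mem_range] at hi
      refine Finset.mem_product.mpr ⟨Finset.mem_range.mpr (Nat.mod_lt _ hN0), Finset.mem_range.mpr ?_⟩
      rw [Nat.div_lt_iff_lt_mul hN0]
      calc i < N ^ 2 := hi
        _ = N * N := by ring
    · intro p hp
      rw [Finset.mem_product, Finset.mem_range, Finset.mem_range] at hp
      rw [Finset.mem_range]
      have h2 : N * (p.2 + 1) ≤ N * N := Nat.mul_le_mul_left _ hp.2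
      have h3 : N ^ 2 = N * N := sq N
      linarith [hp.1]
    · intro i _; exact Nat.mod_add_div i N
    · intro p hp
      rw [Finset.mem_product, Finset.mem_range, Finset.mem_range] at hp
      ext
      · simp only []
        rw [Nat.add_mul_mod_self_left, Nat.mod_eq_of_lt hp.1]
      · simp only []
        rw [Nat.add_mul_div_left _ _ hN0, Nat.div_eq_of_lt hp.1, Nat.zero_add]
    · intro i _; rw [Nat.mod_add_div]
  rw [key]
  -- expand square
  have hNsq : ((N : ZMod (N ^ 2)))^2 = 0 := by
    have : ((N : ZMod (N ^ 2)))^2 = ((N ^ 2 : ℕ) : ZMod (N ^ 2)) := by push_cast; ring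
    rw [this, ZMod.natCast_self]
  have expand : ∀ a b : ℕ,
      ZMod.stdAddChar ((((a + N * b : ℕ)) : ZMod (N ^ 2)) * ((a + N * b : ℕ) : ZMod (N ^ 2)))
      = ZMod.stdAddChar (((a * a : ℕ) : ZMod (N ^ 2)))
        * ZMod.stdAddChar (((2 * a * b : ℕ) : ZMod N)) := by
    intro a b
    rw [← stepdown N (2 * a * b), ← map_add_eq_mul]
    congr 1
    push_cast
    have : ((a : ZMod (N^2)) + N * b) * ((a :ZMod (N^2)) + N * b)
        = a * a + N * (2 * a * b) + ((N : ZMod (N ^ 2)))^2 * (b * b) := by ring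
    rw [this, hNsq]
    ring
  simp only [expand]
  -- inner sum
  have inner : ∀ a : ℕ,
      ∑ b ∈ Finset.range N, ZMod.stdAddChar (((2 * a * b : ℕ) : ZMod N))
        = if ((2 * a : ℕ) : ZMod N) = 0 then (N : ℂ) else 0 := by
    intro a
    rw [← charSum N (((2 * a : ℕ) : ZMod N)), sum_zmod]
    apply Finset.sum_congr rfl
    intro b _
    congr 1
    push_cast
    ring
  have collapse : ∀ a ∈ Finset.range N,
      (∑ b ∈ Finset.range N, ZMod.stdAddChar (((a * a : ℕ) : ZMod (N^2)))
        * ZMod.stdAddChar (((2 * a * b : ℕ) : ZMod N)))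
      = if a = 0 then ZMod.stdAddChar (((a * a : ℕ) : ZMod (N^2))) * N else 0 := by
    intro a ha
    rw [← Finset.mul_sum, inner a]
    have hiff : ((2 * a : ℕ) : ZMod N) = 0 ↔ a = 0 := by
      rw [ZMod.natCast_eq_zero_iff]
      constructor
      · intro hdvd
        have hcop : Nat.Coprime N 2 := by
          exact hN.coprime_two_right
        have hda : N ∣ a := (Nat.Coprime.dvd_of_dvd_mul_left hcop hdvd)
        have hlt := Finset.mem_range.mp ha
        exact Nat.eq_zero_of_dvd_of_lt hda hlt
      · intro h; simp [h]
    by_cases h : a = 0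
    · simp [h, hiff.mpr h]
    · rw [if_neg (fun hh => h (hiff.mp hh)), if_neg h, mul_zero]
  rw [Finset.sum_congr rfl collapse, Finset.sum_ite_eq' (Finset.range N) 0]
  simp [Finset.mem_range.mpr hN0]

lemma conj_stdAddChar (n : ℕ) [NeZero n] (x : ZMod n) :
    (starRingEnd ℂ) (ZMod.stdAddChar x) = ZMod.stdAddChar (-x) := by
  have habs : ‖(ZMod.stdAddChar (N := n) x)‖ = 1 := by
    rw [ZMod.stdAddChar_apply]; exact Circle.norm_coe _
  have hne : (ZMod.stdAddChar (N := n) x) ≠ 0 := by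
    intro h; rw [h] at habs; simp at habs
  have h1 : ZMod.stdAddChar (-x) * ZMod.stdAddChar x = 1 := by
    rw [← map_add_eq_mul]; simp
  have h2 : (starRingEnd ℂ) (ZMod.stdAddChar x) * ZMod.stdAddChar x = 1 := by
    rw [mul_comm, Complex.mul_conj]
    norm_cast
    rw [← Complex.sq_norm, habs]; norm_num
  exact mul_right_cancel₀ hne (h2.trans h1.symm)

noncomputable def Amat (N : ℕ) [NeZero (N ^ 2)] :
    Matrix (ZMod (N ^ 2)) (ZMod (N ^ 2)) ℂ :=
  fun n m => (N : ℂ)⁻¹ * ZMod.stdAddChar (-(n * m))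

noncomputable def Rmat (N : ℕ) [NeZero (N ^ 2)] :
    Matrix (ZMod (N ^ 2)) (ZMod (N ^ 2)) ℂ :=
  fun n m => if m = -n then 1 else 0

variable (N : ℕ) [NeZero (N ^ 2)]

lemma neZeroN : N ≠ 0 := fun h => (NeZero.ne (N ^ 2)) (by simp [h])

lemma castN_ne : (N : ℂ) ≠ 0 := by exact_mod_cast neZeroN N

lemma ff_eq_mulVec (f : ZMod (N ^ 2) → ℂ) :
    finiteFourierSq N f = (Amat N).mulVec f := by
  funext n
  have hchar : ∀ m : ZMod (N ^ 2),
      Complex.exp (-2 * π * Complex.I * (m.val * n.val) / ((N ^ 2 : ℕ) : ℂ))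
        = ZMod.stdAddChar (-(n * m)) := by
    intro m
    have h1 : -(n * m) = (((-(m.val * n.val : ℤ)) : ℤ) : ZMod (N ^ 2)) := by
      push_cast
      rw [ZMod.natCast_zmod_val, ZMod.natCast_zmod_val]
      ring
    rw [h1, ZMod.stdAddChar_coe]
    congr 1
    push_cast
    ring
  simp only [finiteFourierSq, Matrix.mulVec, dotProduct, Amat]
  rw [Finset.mul_sum]
  refine Finset.sum_congr rfl fun m _ => ?_
  rw [hchar m]
  ring

lemma conj_Amat (n m : ZMod (N ^ 2)) :
    (starRingEnd ℂ) (Amat N n m) = Amat N n (-m) := by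
  simp only [Amat, map_mul, map_inv₀, Complex.conj_natCast]
  congr 1
  rw [conj_stdAddChar]
  congr 1
  ring

lemma Rmat_mulVec (f : ZMod (N ^ 2) → ℂ) :
    (Rmat N).mulVec f = fun n => f (-n) := by
  funext n
  simp only [Matrix.mulVec, dotProduct, Rmat, ite_mul, one_mul, zero_mul]
  rw [Finset.sum_ite_eq' Finset.univ (-n) f]
  simp

lemma Amat_mul_Amat : Amat N * Amat N = Rmat N := by
  ext n m
  rw [Matrix.mul_apply]
  have step : ∀ k, Amat N n k * Amat N k m
      = (N : ℂ)⁻¹ * (N : ℂ)⁻¹ * ZMod.stdAddChar ((-(n + m)) * k) := by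
    intro k
    simp only [Amat]
    rw [show (-(n + m)) * k = -(n * k) + -(k * m) by ring, map_add_eq_mul]
    ring
  rw [Finset.sum_congr rfl (fun k _ => step k), ← Finset.mul_sum, charSum]
  have hcond : (-(n + m) = 0) = (m = -n) := by
    rw [neg_eq_zero, add_comm, add_eq_zero_iff_eq_neg]
  simp only [hcond, Rmat]
  split_ifs with hc
  · have hN := castN_ne N
    push_cast
    field_simp
  · ring

lemma Rmat_mul_Rmat : Rmat N * Rmat N = 1 := by
  ext n m
  rw [Matrix.mul_apply]
  have step : ∀ k, Rmat N n k * Rmat N k m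
      = if k = -n then (if m = -k then (1:ℂ) else 0) else 0 := by
    intro k; simp only [Rmat]; split_ifs <;> simp
  rw [Finset.sum_congr rfl (fun k _ => step k),
    Finset.sum_ite_eq' Finset.univ (-n) (fun k => if m = -k then (1:ℂ) else 0)]
  simp [Matrix.one_apply, eq_comm]

lemma trace_Amat (hN : Odd N) : (Amat N).trace = 1 := by
  haveI : NeZero N := ⟨neZeroN N⟩
  have hne := castN_ne N
  rw [Matrix.trace]
  simp only [Matrix.diag, Amat]
  rw [← Finset.mul_sum]
  rw [Finset.sum_congr rfl fun n _ => (conj_stdAddChar (N ^ 2) (n * n)).symm, ← map_sum,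
    gauss_sq N hN]
  simp [hne]

lemma neg_eq_self_iff (hN : Odd N) (n : ZMod (N ^ 2)) : (n = -n) ↔ (n = 0) := by
  constructor
  · intro hh
    have h2 : (2 : ZMod (N ^ 2)) * n = 0 := by
      rw [two_mul, ← eq_neg_iff_add_eq_zero]; exact hh
    have hu : IsUnit (2 : ZMod (N ^ 2)) := by
      have := (ZMod.isUnit_iff_coprime 2 (N ^ 2)).mpr (hN.pow.coprime_two_left)
      simpa using this
    rwa [hu.mul_right_eq_zero] at h2
  · intro hh; simp [hh]

lemma trace_Rmat (hN : Odd N) : (Rmat N).trace = 1 := by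
  rw [Matrix.trace]
  simp only [Matrix.diag, Rmat]
  rw [Finset.sum_congr rfl fun n _ => if_congr (neg_eq_self_iff N hN n) rfl rfl,
    Finset.sum_ite_eq' Finset.univ (0 : ZMod (N ^ 2)) (fun _ => (1:ℂ))]
  simp

lemma trace_RA (hN : Odd N) : (Rmat N * Amat N).trace = 1 := by
  haveI : NeZero N := ⟨neZeroN N⟩
  have hne := castN_ne N
  rw [Matrix.trace]
  simp only [Matrix.diag, Matrix.mul_apply, Rmat, ite_mul, one_mul, zero_mul]
  have step : ∀ n : ZMod (N ^ 2),
      (∑ k, if k = -n then Amat N k n else 0) = Amat N (-n) n := by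
    intro n
    rw [Finset.sum_ite_eq' Finset.univ (-n) (fun k => Amat N k n)]
    simp
  rw [Finset.sum_congr rfl fun n _ => step n]
  simp only [Amat]
  rw [← Finset.mul_sum]
  have harg : ∀ n : ZMod (N ^ 2), -(-n * n) = n * n := fun n => by ring
  rw [Finset.sum_congr rfl fun n _ => by rw [harg n], gauss_sq N hN]
  simp [hne]

end FFSqAux

open FFSqAux in
theorem exists_real_symmetric_eigenfunction_vanishing (N : ℕ) [NeZero (N ^ 2)] (hN : Odd N)
    (T : ℝ) (hT : 0 < T) (h : (N : ℝ) ^ 2 > 4 * N * T + 1) :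
    ∃ f : ZMod (N ^ 2) → ℂ, f ≠ 0 ∧ (∀ n, (f n).im = 0) ∧ (∀ n, f (-n) = f n) ∧
      finiteFourierSq N f = f ∧
      ∀ n : ZMod (N ^ 2), |(n.valMinAbs : ℝ)| ≤ N * T → f n = 0 := by
  have hNne : N ≠ 0 := fun hz => (NeZero.ne (N ^ 2)) (by simp [hz])
  set A := Amat N with hAdef
  have hA2 : A ^ 2 = Rmat N := by rw [pow_two A]; exact Amat_mul_Amat N
  have hA3 : A ^ 3 = Rmat N * A := by rw [pow_succ A 2, hA2]
  have hA4 : A ^ 4 = 1 := by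
    rw [show (4 : ℕ) = 2 * 2 from rfl, pow_mul A 2 2, hA2, pow_two (Rmat N), Rmat_mul_Rmat]
  -- the averaging projector
  set P : Matrix (ZMod (N ^ 2)) (ZMod (N ^ 2)) ℂ :=
    (4 : ℂ)⁻¹ • (1 + A + A ^ 2 + A ^ 3) with hPdef
  have hAP : A * P = P := by
    rw [hPdef, Matrix.mul_smul, mul_add, mul_add, mul_add, mul_one]
    congr 1
    rw [show A * A = A ^ 2 from (pow_two A).symm, show A * A ^ 2 = A ^ 3 from (pow_succ' A 2).symm,
      show A * A ^ 3 = A ^ 4 from (pow_succ' A 3).symm, hA4]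
    abel
  -- the fixed subspace
  set E : Submodule ℂ (ZMod (N ^ 2) → ℂ) :=
    LinearMap.ker (A.mulVecLin - LinearMap.id) with hEdef
  have hmemE : ∀ x : ZMod (N ^ 2) → ℂ, x ∈ E ↔ A.mulVec x = x := by
    intro x
    rw [hEdef, LinearMap.mem_ker, LinearMap.sub_apply, LinearMap.id_apply,
      Matrix.mulVecLin_apply, sub_eq_zero]
  have hproj : LinearMap.IsProj E P.mulVecLin := by
    constructor
    · intro x
      rw [hmemE, Matrix.mulVecLin_apply, Matrix.mulVec_mulVec, hAP]
    · intro x hx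
      rw [hmemE] at hx
      rw [Matrix.mulVecLin_apply, hPdef, Matrix.smul_mulVec, Matrix.add_mulVec,
        Matrix.add_mulVec, Matrix.add_mulVec, Matrix.one_mulVec]
      have h2 : (A ^ 2).mulVec x = x := by
        rw [pow_two A, ← Matrix.mulVec_mulVec, hx, hx]
      have h3 : (A ^ 3).mulVec x = x := by
        rw [pow_succ A 2, ← Matrix.mulVec_mulVec, hx]; exact h2
      rw [hx, h2, h3]
      have : x + x + x + x = (4 : ℂ) • x := by
        funext i; simp [Pi.smul_apply]; ring
      rw [this, smul_smul]
      norm_num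
  -- trace of the projector
  have htraceP : LinearMap.trace ℂ _ P.mulVecLin = (4 : ℂ)⁻¹ * (((N ^ 2 : ℕ) : ℂ) + 3) := by
    rw [LinearMap.trace_eq_matrix_trace ℂ (Pi.basisFun ℂ (ZMod (N ^ 2))),
      LinearMap.toMatrix_eq_toMatrix', ← Matrix.toLin'_apply', LinearMap.toMatrix'_toLin']
    rw [hPdef, Matrix.trace_smul, Matrix.trace_add, Matrix.trace_add, Matrix.trace_add,
      Matrix.trace_one, hA2, hA3, trace_Amat N hN, trace_Rmat N hN, trace_RA N hN]
    rw [ZMod.card]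
    simp [smul_eq_mul]
    ring
  have hfinE : (Module.finrank ℂ E : ℂ) = (4 : ℂ)⁻¹ * (((N ^ 2 : ℕ) : ℂ) + 3) := by
    rw [← htraceP, hproj.trace]
  have hdim : 4 * Module.finrank ℂ E = N ^ 2 + 3 := by
    have h4 : ((4 * Module.finrank ℂ E : ℕ) : ℂ) = ((N ^ 2 + 3 : ℕ) : ℂ) := by
      push_cast
      rw [hfinE]
      push_cast
      ring
    exact_mod_cast h4
  -- dimension count
  set t : ℕ := ⌊(N : ℝ) * T⌋₊ with htdef
  have htle : (t : ℝ) ≤ (N : ℝ) * T := Nat.floor_le (by positivity)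
  have htlt : 4 * t + 1 < N ^ 2 := by
    have : ((4 * t + 1 : ℕ) : ℝ) < ((N ^ 2 : ℕ) : ℝ) := by
      push_cast
      nlinarith
    exact_mod_cast this
  have hrank : t + 1 < Module.finrank ℂ E := by omega
  -- evaluation map
  set ev : E →ₗ[ℂ] (Fin (t + 1) → ℂ) :=
    (LinearMap.pi fun j : Fin (t + 1) =>
      LinearMap.proj (R := ℂ) (φ := fun _ : ZMod (N ^ 2) => ℂ) ((j : ℕ) : ZMod (N ^ 2))).comp
      E.subtype with hevdef
  have hkerne : LinearMap.ker ev ≠ ⊥ := by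
    apply LinearMap.ker_ne_bot_of_finrank_lt
    rw [Module.finrank_pi]
    simpa using hrank
  obtain ⟨x, hxker, hxne⟩ := Submodule.ne_bot_iff _ |>.mp hkerne
  set f₀ : ZMod (N ^ 2) → ℂ := (x : ZMod (N ^ 2) → ℂ) with hf₀def
  have hfix : A.mulVec f₀ = f₀ := (hmemE f₀).mp x.2
  have hf₀ne : f₀ ≠ 0 := fun hz => hxne (Subtype.ext hz)
  have hvanj : ∀ j : Fin (t + 1), f₀ ((j : ℕ) : ZMod (N ^ 2)) = 0 := by
    intro j
    have := congrFun (LinearMap.mem_ker.mp hxker) j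
    simpa [hevdef] using this
  -- general facts for fixed vectors
  have main : ∀ w : ZMod (N ^ 2) → ℂ, A.mulVec w = w →
      (∀ n, w (-n) = w n) ∧ finiteFourierSq N w = w := by
    intro w hw
    constructor
    · intro n
      have hr' : (fun k => w (-k)) = w := by
        rw [← Rmat_mulVec N w, ← Amat_mul_Amat N, ← Matrix.mulVec_mulVec, hw, hw]
      exact congrFun hr' n
    · rw [ff_eq_mulVec, hw]
  have hvan_full : ∀ w : ZMod (N ^ 2) → ℂ, (∀ n, w (-n) = w n) →
      (∀ j : Fin (t + 1), w ((j : ℕ) : ZMod (N ^ 2)) = 0) →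
      ∀ n : ZMod (N ^ 2), |((n.valMinAbs : ℤ) : ℝ)| ≤ (N : ℝ) * T → w n = 0 := by
    intro w hsym hvj n hn
    set a : ℤ := n.valMinAbs with hadef
    have hle : a.natAbs ≤ t := by
      apply Nat.le_floor
      rw [Nat.cast_natAbs]
      exact_mod_cast hn
    have hj : w ((a.natAbs : ℕ) : ZMod (N ^ 2)) = 0 := hvj ⟨a.natAbs, by omega⟩
    have h0 : (((a.natAbs : ℤ)) : ZMod (N ^ 2)) = ((a.natAbs : ℕ) : ZMod (N ^ 2)) :=
      Int.cast_natCast a.natAbs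
    have hvm : ((a : ℤ) : ZMod (N ^ 2)) = n := ZMod.coe_valMinAbs n
    rcases Int.natAbs_eq a with hh | hh
    · have hcast : ((a.natAbs : ℕ) : ZMod (N ^ 2)) = n := by
        rw [← h0, ← hh, hvm]
      rw [← hcast]; exact hj
    · have hcast : ((a.natAbs : ℕ) : ZMod (N ^ 2)) = -n := by
        rw [← h0, show ((a.natAbs : ℤ)) = -a from by omega, Int.cast_neg, hvm]
      rw [← hsym n, ← hcast]; exact hj
  -- conjugate function
  have hsymf := (main f₀ hfix).1
  set g : ZMod (N ^ 2) → ℂ := fun n => (starRingEnd ℂ) (f₀ n) with hgdef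
  have hgsym : ∀ m, g (-m) = g m := fun m => by
    show (starRingEnd ℂ) (f₀ (-m)) = (starRingEnd ℂ) (f₀ m)
    rw [hsymf m]
  have hgfix : A.mulVec g = g := by
    funext n
    calc (A.mulVec g) n = ∑ m, A n m * g m := by
          simp [Matrix.mulVec, dotProduct]
      _ = ∑ m, A n (-m) * g (-m) :=
          (Fintype.sum_equiv (Equiv.neg (ZMod (N ^ 2)))
            (fun m => A n (-m) * g (-m)) (fun m => A n m * g m)
            (fun m => by simp)).symm
      _ = ∑ m, A n (-m) * g m := Finset.sum_congr rfl fun m _ => by rw [hgsym m]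
      _ = ∑ m, (starRingEnd ℂ) (A n m * f₀ m) := by
          refine Finset.sum_congr rfl fun m _ => ?_
          rw [map_mul, conj_Amat N n m]
      _ = (starRingEnd ℂ) (∑ m, A n m * f₀ m) := (map_sum _ _ _).symm
      _ = (starRingEnd ℂ) ((A.mulVec f₀) n) := by
          simp [Matrix.mulVec, dotProduct]
      _ = (starRingEnd ℂ) (f₀ n) := by rw [hfix]
      _ = g n := rfl
  -- the two real candidates
  set u : ZMod (N ^ 2) → ℂ := f₀ + g with hudef
  set v : ZMod (N ^ 2) → ℂ := Complex.I • (f₀ - g) with hvdef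
  have hufix : A.mulVec u = u := by rw [hudef, Matrix.mulVec_add, hfix, hgfix]
  have hvfix : A.mulVec v = v := by
    rw [hvdef, Matrix.mulVec_smul, Matrix.mulVec_sub, hfix, hgfix]
  have huim : ∀ n, (u n).im = 0 := by
    intro n
    show (f₀ n + (starRingEnd ℂ) (f₀ n)).im = 0
    simp
  have hvim : ∀ n, (v n).im = 0 := by
    intro n
    show (Complex.I * (f₀ n - (starRingEnd ℂ) (f₀ n))).im = 0
    simp [Complex.mul_im, Complex.sub_re]
  have hvanu : ∀ j : Fin (t + 1), u ((j : ℕ) : ZMod (N ^ 2)) = 0 := by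
    intro j
    show f₀ _ + (starRingEnd ℂ) (f₀ _) = 0
    rw [hvanj j]
    simp
  have hvanv : ∀ j : Fin (t + 1), v ((j : ℕ) : ZMod (N ^ 2)) = 0 := by
    intro j
    show Complex.I * (f₀ _ - (starRingEnd ℂ) (f₀ _)) = 0
    rw [hvanj j]
    simp
  have hone : u ≠ 0 ∨ v ≠ 0 := by
    by_contra hc
    push_neg at hc
    obtain ⟨hu0, hv0⟩ := hc
    apply hf₀ne
    funext n
    have h1 : f₀ n + (starRingEnd ℂ) (f₀ n) = 0 := congrFun hu0 n
    have h2 : Complex.I * (f₀ n - (starRingEnd ℂ) (f₀ n)) = 0 := congrFun hv0 n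
    have h3 : f₀ n - (starRingEnd ℂ) (f₀ n) = 0 :=
      (mul_eq_zero.mp h2).resolve_left Complex.I_ne_zero
    have h4 : (2 : ℂ) * f₀ n = 0 := by linear_combination h1 + h3
    have h5 : f₀ n = 0 := (mul_eq_zero.mp h4).resolve_left two_ne_zero
    exact h5
  rcases hone with hne | hne
  · obtain ⟨hsymu, hffu⟩ := main u hufix
    exact ⟨u, hne, huim, hsymu, hffu, fun n hn => hvan_full u hsymu hvanu n hn⟩
  · obtain ⟨hsymv, hffv⟩ := main v hvfix
    exact ⟨v, hne, hvim, hsymv, hffv, fun n hn => hvan_full v hsymv hvanv n hn⟩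
end
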